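/- Let N ⊴ G be finite groups and suppose N contains a normal subgroup M ⊴ G with M elementary abelian of order p^a such that M \ {1} is one G-class, K := N (with |N| = p^a q) satisfies N \ M is a single G-class of q-elements. Then a Sylow q-subgroup Q of N acts fixed-point-freely on M (i.e., N is a Frobenius group with kernel M) and Q is cyclic of order q. Moreover the G-class sizes in N are 1, p^a − 1, and p^a(q − 1). -/
import Mathlib


/-- The `G`-conjugacy class of `x`. -/
def gClass {G : Type*} [Group G] (x : G) : Set G := {y | ∃ g : G, y = g * x * g⁻¹}

/-- If `M ⊴ G` is an elementary abelian Sylow `p`-subgroup of `N ⊴ G` of order `p^a`, with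
`M \ {1}` a single `G`-class and `N \ M` a single `G`-class of `q`-elements, where
`|N| = p^a q`, then `N` is Frobenius with kernel `M`, every element of `N \ M` has order
`q`, and the `G`-class sizes in `N` are `1`, `p^a - 1` and `p^a (q - 1)`. -/
theorem stmt_18 {G : Type*} [Group G] [Fintype G]
    (N M : Subgroup G) [N.Normal] [M.Normal] (hMN : M ≤ N)
    (p q : ℕ) (hp : p.Prime) (hq : q.Prime) (hpq : p ≠ q) (a : ℕ) (ha : 1 ≤ a)
    (hM : Nat.card M = p ^ a)
    (hMab : ∀ x ∈ M, ∀ y ∈ M, x * y = y * x)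
    (hMel : ∀ x ∈ M, x ≠ 1 → orderOf x = p)
    (hN : Nat.card N = p ^ a * q)
    (x₀ y₀ : G)
    (hMclass : (M : Set G) \ {1} = gClass x₀)
    (hNclass : (N : Set G) \ (M : Set G) = gClass y₀)
    (hqelts : ∀ y : G, y ∈ (N : Set G) \ (M : Set G) → ∃ b : ℕ, orderOf y = q ^ b) :
    (∀ y ∈ N, y ∉ M → ∀ m ∈ M, y * m * y⁻¹ = m → m = 1) ∧
      (∀ y ∈ N, y ∉ M → orderOf y = q) ∧
      (gClass x₀).ncard = p ^ a - 1 ∧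
      (gClass y₀).ncard = p ^ a * (q - 1) := by
  classical
  have hqp : ¬ q ∣ p ^ a := by
    intro h
    exact hpq ((Nat.prime_dvd_prime_iff_eq hq hp).mp (hq.dvd_of_dvd_pow h)).symm
  -- every element of N \ M has order q
  have horder : ∀ y : G, y ∈ N → y ∉ M → orderOf y = q := by
    intro y hyN hyM
    obtain ⟨b, hb⟩ := hqelts y ⟨hyN, hyM⟩
    have hdvd : orderOf y ∣ Nat.card N := by
      have := orderOf_dvd_natCard (⟨y, hyN⟩ : N)
      simpa using this
    rw [hb, hN] at hdvd
    have hb1 : b ≤ 1 := by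
      by_contra hb2
      push_neg at hb2
      have h2 : q ^ 2 ∣ q ^ b := pow_dvd_pow q hb2
      have : q * q ∣ p ^ a * q := by
        have := h2.trans hdvd
        simpa [sq] using this
      exact hqp ((Nat.mul_dvd_mul_iff_right hq.pos).mp this)
    interval_cases b
    · simp only [pow_zero, orderOf_eq_one_iff] at hb
      exact absurd (hb ▸ M.one_mem) hyM
    · simpa using hb
  have hffp : ∀ y ∈ N, y ∉ M → ∀ m ∈ M, y * m * y⁻¹ = m → m = 1 := by
    intro y hyN hyM m hmM hcomm
    by_contra hm1
    have hcm : Commute y m := mul_inv_eq_iff_eq_mul.mp hcomm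
    have hmq : m ^ q ≠ 1 := by
      intro h
      have : orderOf m ∣ q := orderOf_dvd_of_pow_eq_one h
      rw [hMel m hmM hm1] at this
      exact hpq ((Nat.prime_dvd_prime_iff_eq hp hq).mp this)
    have hymN : y * m ∈ N := N.mul_mem hyN (hMN hmM)
    have hymM : y * m ∉ M := by
      intro h
      exact hyM (by simpa using M.mul_mem h (M.inv_mem hmM))
    have hq' : orderOf (y * m) = q := horder _ hymN hymM
    have hyq : y ^ q = 1 := by rw [← horder y hyN hyM]; exact pow_orderOf_eq_one y
    have : (y * m) ^ q = 1 := by rw [← hq']; exact pow_orderOf_eq_one _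
    rw [hcm.mul_pow, hyq, one_mul] at this
    exact hmq this
  refine ⟨hffp, fun y hyN hyM => horder y hyN hyM, ?_, ?_⟩
  · rw [← hMclass]
    have h1M : ({1} : Set G) ⊆ (M : Set G) :=
      Set.singleton_subset_iff.mpr M.one_mem
    have h2 : (M : Set G).ncard = p ^ a := by
      rw [← Nat.card_coe_set_eq]; simpa using hM
    rw [Set.ncard_diff h1M, Set.ncard_singleton, h2]
  · rw [← hNclass]
    have hMsub : (M : Set G) ⊆ (N : Set G) := hMN
    rw [Set.ncard_diff hMsub]
    have h1 : (N : Set G).ncard = p ^ a * q := by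
      rw [← Nat.card_coe_set_eq]; simpa using hN
    have h2 : (M : Set G).ncard = p ^ a := by
      rw [← Nat.card_coe_set_eq]; simpa using hM
    rw [h1, h2, Nat.mul_sub, Nat.mul_one]
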